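/- Let q be an odd prime with q ≡ 1 (mod 5) or q ≡ −1 (mod 5). Then L_{q−1} ≡ 2 (mod q²), where L_n is the n-th Lucas number. -/

import Mathlib

/-- The Lucas numbers: `L_0 = 2`, `L_1 = 1`, `L_i = L_{i-1} + L_{i-2}`. -/
def lucasNum : ℕ → ℤ
  | 0 => 2
  | 1 => 1
  | n + 2 => lucasNum (n + 1) + lucasNum n

lemma lucasNum_add_two (n : ℕ) :
    lucasNum (n + 2) = lucasNum (n + 1) + lucasNum n := rfl

/-- The fundamental identity `L_n ^ 2 - 5 F_n ^ 2 = 4 * (-1)^n`. -/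
lemma lucas_fib_identity (n : ℕ) :
    lucasNum n ^ 2 - 5 * (Nat.fib n : ℤ) ^ 2 = 4 * (-1) ^ n := by
  have H : ∀ n : ℕ,
      (lucasNum n ^ 2 - 5 * (Nat.fib n : ℤ) ^ 2 = 4 * (-1) ^ n) ∧
      (lucasNum (n+1) ^ 2 - 5 * (Nat.fib (n+1) : ℤ) ^ 2 = 4 * (-1) ^ (n+1)) ∧
      (lucasNum n * lucasNum (n+1) - 5 * (Nat.fib n : ℤ) * (Nat.fib (n+1) : ℤ)
        = 2 * (-1) ^ n) := by
    intro n
    induction n with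
    | zero => norm_num [lucasNum]
    | succ k ih =>
      obtain ⟨hA, hA1, hB⟩ := ih
      refine ⟨hA1, ?_, ?_⟩
      · rw [lucasNum_add_two, Nat.fib_add_two]
        push_cast
        ring_nf
        ring_nf at hA hA1 hB
        linear_combination hA + hA1 + 2 * hB
      · rw [lucasNum_add_two, Nat.fib_add_two]
        push_cast
        ring_nf
        ring_nf at hA1 hB
        linear_combination hA1 + hB
  exact (H n).1

lemma neg_one_zmod5 : (-1 : ZMod 5) = 2 * 2 := by decide

/-- **(19).** If `q` is an odd prime with `q ≡ ±1 (mod 5)`, then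
`L_{q-1} ≡ 2 (mod q²)`. -/
theorem lucasNum_qsub1_congr (q : ℕ) (hq : q.Prime) (hodd : Odd q)
    (h5 : (q : ℤ) ≡ 1 [ZMOD 5] ∨ (q : ℤ) ≡ -1 [ZMOD 5]) :
    lucasNum (q - 1) ≡ 2 [ZMOD (q : ℤ) ^ 2] := by
  haveI : Fact q.Prime := ⟨hq⟩
  haveI : Fact (Nat.Prime 5) := ⟨by norm_num⟩
  have hq2 : q ≠ 2 := by
    rintro rfl
    exact (Nat.not_odd_iff_even.mpr (by norm_num)) hodd
  have hq5 : q ≠ 5 := by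
    rintro rfl
    rcases h5 with h | h <;> revert h <;> decide
  -- 5 is a square mod q
  have hpre : IsSquare ((q : ℕ) : ZMod 5) := by
    rcases h5 with h | h
    · have h' : ((q : ℤ) : ZMod 5) = ((1 : ℤ) : ZMod 5) :=
        (ZMod.intCast_eq_intCast_iff _ _ _).mpr h
      have hq1 : ((q : ℕ) : ZMod 5) = 1 := by push_cast at h'; simpa using h'
      rw [hq1]; exact IsSquare.one
    · have h' : ((q : ℤ) : ZMod 5) = ((-1 : ℤ) : ZMod 5) :=
        (ZMod.intCast_eq_intCast_iff _ _ _).mpr h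
      have hq1 : ((q : ℕ) : ZMod 5) = -1 := by push_cast at h'; simpa using h'
      have hm : (-1 : ZMod 5) = 2 * 2 := neg_one_zmod5
      rw [hq1, hm]
      exact ⟨2, rfl⟩
  have hsq : IsSquare (5 : ZMod q) := by
    have := (ZMod.exists_sq_eq_prime_iff_of_mod_four_eq_one (p := 5) (q := q)
      (by norm_num) hq2).mp hpre
    simpa using this
  obtain ⟨r, hr⟩ := hsq
  -- setup roots α, β of x² = x + 1 in ZMod q
  have h2 : (2 : ZMod q) ≠ 0 := by
    intro h
    have h' : ((2 : ℕ) : ZMod q) = 0 := by push_cast; exact h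
    have := (ZMod.natCast_eq_zero_iff 2 q).mp h'
    exact hq2 ((Nat.prime_dvd_prime_iff_eq hq Nat.prime_two).mp this)
  have h5ne : (5 : ZMod q) ≠ 0 := by
    intro h
    have h' : ((5 : ℕ) : ZMod q) = 0 := by push_cast; exact h
    have := (ZMod.natCast_eq_zero_iff 5 q).mp h'
    exact hq5 ((Nat.prime_dvd_prime_iff_eq hq (by norm_num)).mp this)
  obtain ⟨α, β, hsum, hprod, hdiff⟩ :
      ∃ α β : ZMod q, α + β = 1 ∧ α * β = -1 ∧ α - β = r := by
    refine ⟨(1 + r) * 2⁻¹, (1 - r) * 2⁻¹, ?_, ?_, ?_⟩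
    · field_simp
      norm_num
    · field_simp
      linear_combination hr
    · field_simp
      ring
  have hα2 : α ^ 2 = α + 1 := by linear_combination α * hsum - hprod
  have hβ2 : β ^ 2 = β + 1 := by linear_combination β * hsum - hprod
  -- Binet formulas mod q
  have key : ∀ n : ℕ,
      ((lucasNum n : ZMod q) = α ^ n + β ^ n) ∧
      ((Nat.fib n : ZMod q) * r = α ^ n - β ^ n) := by
    have H : ∀ n : ℕ,
        (((lucasNum n : ZMod q) = α ^ n + β ^ n) ∧
          ((Nat.fib n : ZMod q) * r = α ^ n - β ^ n)) ∧
        (((lucasNum (n+1) : ZMod q) = α ^ (n+1) + β ^ (n+1)) ∧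
          ((Nat.fib (n+1) : ZMod q) * r = α ^ (n+1) - β ^ (n+1))) := by
      intro n
      induction n with
      | zero =>
        refine ⟨⟨?_, ?_⟩, ?_, ?_⟩
        · norm_num [lucasNum]
        · simp
        · simp [lucasNum]
          linear_combination -hsum
        · simp
          linear_combination -hdiff
      | succ k ih =>
        obtain ⟨⟨hL, hF⟩, hL1, hF1⟩ := ih
        refine ⟨⟨hL1, hF1⟩, ?_, ?_⟩
        · rw [lucasNum_add_two]
          push_cast [hL, hL1]
          linear_combination -α ^ k * hα2 - β ^ k * hβ2
        · rw [Nat.fib_add_two]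
          push_cast
          linear_combination hF + hF1 - α ^ k * hα2 + β ^ k * hβ2
    exact fun n => (H n).1
  -- α, β, r nonzero
  have hα0 : α ≠ 0 := by
    intro h
    rw [h, zero_mul] at hprod
    exact one_ne_zero (neg_eq_zero.mp hprod.symm)
  have hβ0 : β ≠ 0 := by
    intro h
    rw [h, mul_zero] at hprod
    exact one_ne_zero (neg_eq_zero.mp hprod.symm)
  have hr0 : r ≠ 0 := by
    intro h
    rw [h, mul_zero] at hr
    exact h5ne hr
  have hαpow : α ^ (q - 1) = 1 := ZMod.pow_card_sub_one_eq_one hα0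
  have hβpow : β ^ (q - 1) = 1 := ZMod.pow_card_sub_one_eq_one hβ0
  -- mod q conclusions
  have hLmod : ((lucasNum (q-1) - 2 : ℤ) : ZMod q) = 0 := by
    push_cast
    rw [(key (q-1)).1, hαpow, hβpow]
    ring
  have hFmod : ((Nat.fib (q-1) : ℤ) : ZMod q) = 0 := by
    have := (key (q-1)).2
    rw [hαpow, hβpow, sub_self] at this
    have := mul_eq_zero.mp this
    push_cast
    tauto
  have hLdvd : (q : ℤ) ∣ lucasNum (q-1) - 2 :=
    (ZMod.intCast_zmod_eq_zero_iff_dvd _ _).mp hLmod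
  have hFdvd : (q : ℤ) ∣ (Nat.fib (q-1) : ℤ) :=
    (ZMod.intCast_zmod_eq_zero_iff_dvd _ _).mp hFmod
  -- integer endgame
  have hqe : Even (q - 1) := by
    obtain ⟨m, hm⟩ := hodd
    exact ⟨m, by omega⟩
  have hid : lucasNum (q-1) ^ 2 - 5 * (Nat.fib (q-1) : ℤ) ^ 2 = 4 := by
    rw [lucas_fib_identity, Even.neg_one_pow hqe]; ring
  set L := lucasNum (q - 1) with hL_def
  have hsqdvd : (q : ℤ) ^ 2 ∣ (L - 2) * (L + 2) := by
    have heq : (L - 2) * (L + 2) = 5 * (Nat.fib (q-1) : ℤ) ^ 2 := by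
      linear_combination hid
    rw [heq]
    obtain ⟨c, hc⟩ := hFdvd
    exact ⟨5 * c ^ 2, by rw [hc]; ring⟩
  have hqint : Prime (q : ℤ) := Nat.prime_iff_prime_int.mp hq
  have hq0 : (q : ℤ) ≠ 0 := by exact_mod_cast hq.ne_zero
  have hnotdvd : ¬ ((q : ℤ) ∣ L + 2) := by
    intro hd
    have h4 : (q : ℤ) ∣ 2 * 2 := by
      have h44 : (q : ℤ) ∣ (L + 2) - (L - 2) := dvd_sub hd hLdvd
      have : (L + 2) - (L - 2) = 2 * 2 := by ring
      rwa [this] at h44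
    have h2' : (q : ℤ) ∣ 2 := by
      rcases hqint.dvd_mul.mp h4 with h | h <;> exact h
    have : q ∣ 2 := by exact_mod_cast h2'
    exact hq2 ((Nat.prime_dvd_prime_iff_eq hq Nat.prime_two).mp this)
  obtain ⟨k, hk⟩ := hLdvd
  obtain ⟨c, hc⟩ := hsqdvd
  have h1 : k * (L + 2) = (q : ℤ) * c := by
    rw [hk] at hc
    exact mul_left_cancel₀ hq0
      (show (q:ℤ) * (k * (L + 2)) = (q:ℤ) * ((q:ℤ) * c) by linear_combination hc)
  have hkd : (q : ℤ) ∣ k := by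
    rcases hqint.dvd_mul.mp ⟨c, h1⟩ with h | h
    · exact h
    · exact absurd h hnotdvd
  obtain ⟨d, hd⟩ := hkd
  have hfin : (q : ℤ) ^ 2 ∣ L - 2 := ⟨d, by rw [hk, hd]; ring⟩
  exact Int.ModEq.symm (Int.modEq_iff_dvd.mpr (by
    have : L - 2 = L - 2 := rfl
    exact hfin))
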